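/- Let S and T be sets and let Φ : S × T → ℂ be given by Φ(s,t) = ⟨x_s, y_t⟩ for families of vectors {x_s} in a Hilbert space H indexed by S and {y_t} in H indexed by T, with sup_s ‖x_s‖ ≤ C₁ and sup_t ‖y_t‖ ≤ C₂. Then for every finitely supported matrix a : S × T → ℂ, the operator norm of the Schur (entrywise) product {Φ(s,t)a(s,t)} as an operator from ℓ²(T) to ℓ²(S) is at most C₁·C₂ times the operator norm of {a(s,t)}. -/

import Mathlib

open MeasureTheory

/-- Operator norm (from `ℓ²(T)` to `ℓ²(S)`) of a matrix `a : S × T → ℂ`, expressed as the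
supremum of `|⟨Af, g⟩|` over `f`, `g` in the unit balls of `ℓ²(T)` and `ℓ²(S)`. -/
noncomputable def opNormFS {S T : Type*} (a : S × T → ℂ) : ℝ :=
  sSup {r : ℝ | ∃ f : T → ℂ, ∃ g : S → ℂ,
    Summable (fun t => ‖f t‖ ^ 2) ∧ Summable (fun s => ‖g s‖ ^ 2) ∧
    (∑' t, ‖f t‖ ^ 2) ≤ 1 ∧ (∑' s, ‖g s‖ ^ 2) ≤ 1 ∧
    r = ‖∑' p : S × T, a p * f p.2 * (starRingEnd ℂ) (g p.1)‖}

namespace SchurAux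

variable {S T : Type*}

def normSet (a : S × T → ℂ) : Set ℝ :=
  {r : ℝ | ∃ f : T → ℂ, ∃ g : S → ℂ,
    Summable (fun t => ‖f t‖ ^ 2) ∧ Summable (fun s => ‖g s‖ ^ 2) ∧
    (∑' t, ‖f t‖ ^ 2) ≤ 1 ∧ (∑' s, ‖g s‖ ^ 2) ≤ 1 ∧
    r = ‖∑' p : S × T, a p * f p.2 * (starRingEnd ℂ) (g p.1)‖}

lemma opNormFS_eq (a : S × T → ℂ) : opNormFS a = sSup (normSet a) := rfl

lemma zero_mem (a : S × T → ℂ) : (0 : ℝ) ∈ normSet a := by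
  refine ⟨fun _ => 0, fun _ => 0, ?_, ?_, ?_, ?_, ?_⟩
  · simpa using summable_zero
  · simpa using summable_zero
  · simp
  · simp
  · simp

lemma norm_le_one {ι : Type*} {f : ι → ℂ} (hf : Summable fun t => ‖f t‖ ^ 2)
    (hf1 : (∑' t, ‖f t‖ ^ 2) ≤ 1) (t : ι) : ‖f t‖ ≤ 1 := by
  have h1 : ‖f t‖ ^ 2 ≤ ∑' j, ‖f j‖ ^ 2 := Summable.le_tsum hf t fun j _ => sq_nonneg _
  nlinarith [norm_nonneg (f t)]

lemma bddAbove_normSet {a : S × T → ℂ} (ha : (Function.support a).Finite) :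
    BddAbove (normSet a) := by
  refine ⟨∑ p ∈ ha.toFinset, ‖a p‖, ?_⟩
  rintro r ⟨f, g, hf, hg, hf1, hg1, rfl⟩
  rw [tsum_eq_sum (s := ha.toFinset) (fun p hp => by
    have : a p = 0 := Function.notMem_support.mp (fun h => hp (ha.mem_toFinset.mpr h))
    simp [this])]
  refine le_trans (norm_sum_le _ _) (Finset.sum_le_sum fun p _ => ?_)
  rw [norm_mul, norm_mul, RCLike.norm_conj]
  have h1 := norm_le_one hf hf1 p.2
  have h2 := norm_le_one hg hg1 p.1
  calc ‖a p‖ * ‖f p.2‖ * ‖g p.1‖ ≤ ‖a p‖ * ‖f p.2‖ * 1 :=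
        mul_le_mul_of_nonneg_left h2 (by positivity)
    _ = ‖a p‖ * ‖f p.2‖ := mul_one _
    _ ≤ ‖a p‖ * 1 := mul_le_mul_of_nonneg_left h1 (norm_nonneg _)
    _ = ‖a p‖ := mul_one _

lemma opNormFS_nonneg {a : S × T → ℂ} (ha : (Function.support a).Finite) :
    0 ≤ opNormFS a := by
  rw [opNormFS_eq]; exact le_csSup (bddAbove_normSet ha) (zero_mem a)

lemma le_opNormFS {a : S × T → ℂ} (ha : (Function.support a).Finite) {r : ℝ}
    (h : r ∈ normSet a) : r ≤ opNormFS a := by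
  rw [opNormFS_eq]; exact le_csSup (bddAbove_normSet ha) h

lemma opNormFS_of_isEmpty [IsEmpty (S × T)] (a : S × T → ℂ) : opNormFS a = 0 := by
  rw [opNormFS_eq]
  have h : normSet a = {0} := by
    apply le_antisymm
    · rintro r ⟨f, g, -, -, -, -, rfl⟩
      simp [tsum_empty]
    · simpa using zero_mem a
  rw [h, csSup_singleton]

lemma keyBound (a : S × T → ℂ) (ha : (Function.support a).Finite)
    (f : T → ℂ) (g : S → ℂ)
    (hf : Summable fun t => ‖f t‖ ^ 2) (hg : Summable fun s => ‖g s‖ ^ 2) :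
    ‖∑' p : S × T, a p * f p.2 * (starRingEnd ℂ) (g p.1)‖ ≤
      opNormFS a * Real.sqrt (∑' t, ‖f t‖ ^ 2) * Real.sqrt (∑' s, ‖g s‖ ^ 2) := by
  set α := Real.sqrt (∑' t, ‖f t‖ ^ 2) with hαdef
  set β := Real.sqrt (∑' s, ‖g s‖ ^ 2) with hβdef
  have hα0 : 0 ≤ α := Real.sqrt_nonneg _
  have hβ0 : 0 ≤ β := Real.sqrt_nonneg _
  have hfs : 0 ≤ ∑' t, ‖f t‖ ^ 2 := tsum_nonneg fun _ => sq_nonneg _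
  have hgs : 0 ≤ ∑' s, ‖g s‖ ^ 2 := tsum_nonneg fun _ => sq_nonneg _
  have hα2 : α ^ 2 = ∑' t, ‖f t‖ ^ 2 := Real.sq_sqrt hfs
  have hβ2 : β ^ 2 = ∑' s, ‖g s‖ ^ 2 := Real.sq_sqrt hgs
  rcases eq_or_lt_of_le hα0 with h0 | hαpos
  · have hsum0 : ∑' t, ‖f t‖ ^ 2 = 0 := by rw [← hα2, ← h0]; ring
    have hf0 : ∀ t, f t = 0 := by
      intro t
      have h1 : ‖f t‖ ^ 2 ≤ (0 : ℝ) := by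
        rw [← hsum0]; exact Summable.le_tsum hf t fun j _ => sq_nonneg _
      have h2 : ‖f t‖ = 0 := by nlinarith [norm_nonneg (f t)]
      simpa using h2
    have hz : ∀ p : S × T, a p * f p.2 * (starRingEnd ℂ) (g p.1) = 0 := fun p => by
      simp [hf0]
    rw [tsum_congr hz, ← h0]
    simp
  rcases eq_or_lt_of_le hβ0 with h0 | hβpos
  · have hsum0 : ∑' s, ‖g s‖ ^ 2 = 0 := by rw [← hβ2, ← h0]; ring
    have hg0 : ∀ s, g s = 0 := by
      intro s
      have h1 : ‖g s‖ ^ 2 ≤ (0 : ℝ) := by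
        rw [← hsum0]; exact Summable.le_tsum hg s fun j _ => sq_nonneg _
      have h2 : ‖g s‖ = 0 := by nlinarith [norm_nonneg (g s)]
      simpa using h2
    have hz : ∀ p : S × T, a p * f p.2 * (starRingEnd ℂ) (g p.1) = 0 := fun p => by
      simp [hg0]
    rw [tsum_congr hz, ← h0]
    simp
  -- main case
  set f' : T → ℂ := fun t => (↑α)⁻¹ * f t with hf'def
  set g' : S → ℂ := fun s => (↑β)⁻¹ * g s with hg'def
  have hαne : (α : ℂ) ≠ 0 := by exact_mod_cast hαpos.ne'
  have hβne : (β : ℂ) ≠ 0 := by exact_mod_cast hβpos.ne'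
  have hf'eq : (fun t => ‖f' t‖ ^ 2) = fun t => (α⁻¹) ^ 2 * ‖f t‖ ^ 2 := by
    funext t
    rw [hf'def]
    rw [norm_mul, mul_pow, norm_inv, Complex.norm_real, Real.norm_eq_abs,
      abs_of_pos hαpos]
  have hg'eq : (fun s => ‖g' s‖ ^ 2) = fun s => (β⁻¹) ^ 2 * ‖g s‖ ^ 2 := by
    funext s
    rw [hg'def]
    rw [norm_mul, mul_pow, norm_inv, Complex.norm_real, Real.norm_eq_abs,
      abs_of_pos hβpos]
  have hf'sum : Summable fun t => ‖f' t‖ ^ 2 := by rw [hf'eq]; exact hf.mul_left _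
  have hg'sum : Summable fun s => ‖g' s‖ ^ 2 := by rw [hg'eq]; exact hg.mul_left _
  have hf'1 : (∑' t, ‖f' t‖ ^ 2) ≤ 1 := by
    rw [hf'eq, tsum_mul_left, ← hα2]
    rw [inv_pow, inv_mul_cancel₀ (by positivity)]
  have hg'1 : (∑' s, ‖g' s‖ ^ 2) ≤ 1 := by
    rw [hg'eq, tsum_mul_left, ← hβ2]
    rw [inv_pow, inv_mul_cancel₀ (by positivity)]
  have hmem : ‖∑' p : S × T, a p * f' p.2 * (starRingEnd ℂ) (g' p.1)‖ ∈ normSet a :=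
    ⟨f', g', hf'sum, hg'sum, hf'1, hg'1, rfl⟩
  have hle := le_opNormFS ha hmem
  have hid : ∀ p : S × T, a p * f p.2 * (starRingEnd ℂ) (g p.1) =
      ((α : ℂ) * β) * (a p * f' p.2 * (starRingEnd ℂ) (g' p.1)) := by
    intro p
    rw [hf'def, hg'def]
    simp only [map_mul, map_inv₀, Complex.conj_ofReal]
    field_simp
  rw [tsum_congr hid, tsum_mul_left, norm_mul]
  have hnorm : ‖(α : ℂ) * β‖ = α * β := by
    rw [norm_mul, Complex.norm_real, Complex.norm_real, Real.norm_eq_abs,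
      Real.norm_eq_abs, abs_of_pos hαpos, abs_of_pos hβpos]
  rw [hnorm, show opNormFS a * α * β = (α * β) * opNormFS a by ring]
  exact mul_le_mul_of_nonneg_left hle (by positivity)

end SchurAux

open SchurAux

theorem stmt0 {S T H : Type*} [NormedAddCommGroup H] [InnerProductSpace ℂ H]
    [CompleteSpace H]
    (x : S → H) (y : T → H) (C₁ C₂ : ℝ)
    (hx : ∀ s, ‖x s‖ ≤ C₁) (hy : ∀ t, ‖y t‖ ≤ C₂)
    (Φ : S × T → ℂ) (hΦ : ∀ s t, Φ (s, t) = inner ℂ (x s) (y t))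
    (a : S × T → ℂ) (ha : (Function.support a).Finite) :
    opNormFS (fun p => Φ p * a p) ≤ C₁ * C₂ * opNormFS a := by
  classical
  rcases isEmpty_or_nonempty S with hS | hS
  · haveI : IsEmpty (S × T) := ⟨fun p => hS.false p.1⟩
    rw [opNormFS_of_isEmpty, opNormFS_of_isEmpty]
    simp
  rcases isEmpty_or_nonempty T with hT | hT
  · haveI : IsEmpty (S × T) := ⟨fun p => hT.false p.2⟩
    rw [opNormFS_of_isEmpty, opNormFS_of_isEmpty]
    simp
  have hC₁ : 0 ≤ C₁ := by obtain ⟨s⟩ := hS; exact (norm_nonneg (x s)).trans (hx s)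
  have hC₂ : 0 ≤ C₂ := by obtain ⟨t⟩ := hT; exact (norm_nonneg (y t)).trans (hy t)
  have hN0 : 0 ≤ opNormFS a := opNormFS_nonneg ha
  rw [opNormFS_eq]
  apply Real.sSup_le _ (by positivity)
  rintro r ⟨f, g, hf, hg, hf1, hg1, rfl⟩
  set A : Finset (S × T) := ha.toFinset with hAdef
  have hA : ∀ p, p ∉ A → a p = 0 := fun p hp =>
    Function.notMem_support.mp (fun h => hp (ha.mem_toFinset.mpr h))
  set V : Submodule ℂ H := Submodule.span ℂ (y '' (Prod.snd '' Function.support a))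
    with hVdef
  haveI : FiniteDimensional ℂ V :=
    FiniteDimensional.span_of_finite ℂ ((ha.image _).image _)
  have hyV : ∀ p : S × T, p ∈ A → y p.2 ∈ V := fun p hp => by
    apply Submodule.subset_span
    exact ⟨p.2, ⟨p, ha.mem_toFinset.mp hp, rfl⟩, rfl⟩
  set b := stdOrthonormalBasis ℂ V with hbdef
  set e : Fin (Module.finrank ℂ V) → H := fun i => ((b i : V) : H) with hedef
  have he : Orthonormal ℂ e := by
    constructor
    · intro i
      have h1 := b.orthonormal.1 i
      rwa [Submodule.coe_norm] at h1
    · intro i j hij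
      have h1 : (inner ℂ (b i) (b j) : ℂ) = 0 := b.orthonormal.2 hij
      rwa [Submodule.coe_inner] at h1
  have hrep : ∀ (u v : H), v ∈ V →
      (inner ℂ u v : ℂ) = ∑ i, (inner ℂ u (e i) : ℂ) * inner ℂ (e i) v := by
    intro u v hv
    have hv' : v = ∑ i, b.repr ⟨v, hv⟩ i • e i := by
      conv_lhs => rw [show v = ((⟨v, hv⟩ : V) : H) from rfl, ← b.sum_repr ⟨v, hv⟩]
      rw [Submodule.coe_sum]
      simp [hedef]
    calc (inner ℂ u v : ℂ) = inner ℂ u (∑ i, b.repr ⟨v, hv⟩ i • e i) := by rw [← hv']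
      _ = ∑ i, b.repr ⟨v, hv⟩ i * inner ℂ u (e i) := by
          rw [inner_sum]
          exact Finset.sum_congr rfl fun i _ => inner_smul_right _ _ _
      _ = ∑ i, (inner ℂ u (e i) : ℂ) * inner ℂ (e i) v := by
          refine Finset.sum_congr rfl fun i _ => ?_
          rw [b.repr_apply_apply, Submodule.coe_inner]
          rw [show ((⟨v, hv⟩ : V) : H) = v from rfl]
          ring
  set fi : Fin (Module.finrank ℂ V) → T → ℂ :=
    fun i t => inner ℂ (e i) (f t • y t) with hfidef
  set gi : Fin (Module.finrank ℂ V) → S → ℂ :=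
    fun i s => inner ℂ (e i) (g s • x s) with hgidef
  -- pointwise expansion on the support
  have hpt : ∀ p ∈ A, Φ p * f p.2 * (starRingEnd ℂ) (g p.1) =
      ∑ i, fi i p.2 * (starRingEnd ℂ) (gi i p.1) := by
    rintro ⟨s, t⟩ hp
    have h1 : Φ (s, t) * f t * (starRingEnd ℂ) (g s) =
        (inner ℂ (g s • x s) (f t • y t) : ℂ) := by
      rw [hΦ s t, inner_smul_left, inner_smul_right]; ring
    rw [h1, hrep (g s • x s) (f t • y t) (Submodule.smul_mem _ _ (hyV (s, t) hp))]
    refine Finset.sum_congr rfl fun i _ => ?_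
    rw [hfidef, hgidef]
    simp only []
    rw [← inner_conj_symm (g s • x s) (e i)]
    ring
  -- summability and Bessel bounds
  have hfi_le : ∀ i t, ‖fi i t‖ ^ 2 ≤ C₂ ^ 2 * ‖f t‖ ^ 2 := by
    intro i t
    have h1 : ‖fi i t‖ ≤ ‖f t • y t‖ := by
      calc ‖fi i t‖ ≤ ‖e i‖ * ‖f t • y t‖ := norm_inner_le_norm _ _
        _ = ‖f t • y t‖ := by rw [he.1 i, one_mul]
    rw [norm_smul] at h1
    calc ‖fi i t‖ ^ 2 ≤ (‖f t‖ * ‖y t‖) ^ 2 := pow_le_pow_left₀ (norm_nonneg _) h1 2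
      _ = ‖y t‖ ^ 2 * ‖f t‖ ^ 2 := by ring
      _ ≤ C₂ ^ 2 * ‖f t‖ ^ 2 :=
          mul_le_mul_of_nonneg_right (pow_le_pow_left₀ (norm_nonneg _) (hy t) 2)
            (sq_nonneg _)
  have hgi_le : ∀ i s, ‖gi i s‖ ^ 2 ≤ C₁ ^ 2 * ‖g s‖ ^ 2 := by
    intro i s
    have h1 : ‖gi i s‖ ≤ ‖g s • x s‖ := by
      calc ‖gi i s‖ ≤ ‖e i‖ * ‖g s • x s‖ := norm_inner_le_norm _ _
        _ = ‖g s • x s‖ := by rw [he.1 i, one_mul]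
    rw [norm_smul] at h1
    calc ‖gi i s‖ ^ 2 ≤ (‖g s‖ * ‖x s‖) ^ 2 := pow_le_pow_left₀ (norm_nonneg _) h1 2
      _ = ‖x s‖ ^ 2 * ‖g s‖ ^ 2 := by ring
      _ ≤ C₁ ^ 2 * ‖g s‖ ^ 2 :=
          mul_le_mul_of_nonneg_right (pow_le_pow_left₀ (norm_nonneg _) (hx s) 2)
            (sq_nonneg _)
  have hfisum : ∀ i, Summable fun t => ‖fi i t‖ ^ 2 := fun i =>
    Summable.of_nonneg_of_le (fun t => sq_nonneg _) (fun t => hfi_le i t)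
      (hf.mul_left _)
  have hgisum : ∀ i, Summable fun s => ‖gi i s‖ ^ 2 := fun i =>
    Summable.of_nonneg_of_le (fun s => sq_nonneg _) (fun s => hgi_le i s)
      (hg.mul_left _)
  have hfB : ∑ i, ∑' t, ‖fi i t‖ ^ 2 ≤ C₂ ^ 2 := by
    rw [← Summable.tsum_finsetSum fun i _ => hfisum i]
    calc ∑' t, ∑ i, ‖fi i t‖ ^ 2 ≤ ∑' t, C₂ ^ 2 * ‖f t‖ ^ 2 := by
          refine Summable.tsum_le_tsum (fun t => ?_) (summable_sum fun i _ => hfisum i)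
            (hf.mul_left _)
          calc ∑ i, ‖fi i t‖ ^ 2 ≤ ‖f t • y t‖ ^ 2 :=
                Orthonormal.sum_inner_products_le _ he
            _ ≤ C₂ ^ 2 * ‖f t‖ ^ 2 := by
                rw [norm_smul]
                calc (‖f t‖ * ‖y t‖) ^ 2 = ‖y t‖ ^ 2 * ‖f t‖ ^ 2 := by ring
                  _ ≤ C₂ ^ 2 * ‖f t‖ ^ 2 :=
                      mul_le_mul_of_nonneg_right
                        (pow_le_pow_left₀ (norm_nonneg _) (hy t) 2) (sq_nonneg _)
      _ = C₂ ^ 2 * ∑' t, ‖f t‖ ^ 2 := tsum_mul_left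
      _ ≤ C₂ ^ 2 * 1 := mul_le_mul_of_nonneg_left hf1 (sq_nonneg _)
      _ = C₂ ^ 2 := mul_one _
  have hgB : ∑ i, ∑' s, ‖gi i s‖ ^ 2 ≤ C₁ ^ 2 := by
    rw [← Summable.tsum_finsetSum fun i _ => hgisum i]
    calc ∑' s, ∑ i, ‖gi i s‖ ^ 2 ≤ ∑' s, C₁ ^ 2 * ‖g s‖ ^ 2 := by
          refine Summable.tsum_le_tsum (fun s => ?_) (summable_sum fun i _ => hgisum i)
            (hg.mul_left _)
          calc ∑ i, ‖gi i s‖ ^ 2 ≤ ‖g s • x s‖ ^ 2 :=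
                Orthonormal.sum_inner_products_le _ he
            _ ≤ C₁ ^ 2 * ‖g s‖ ^ 2 := by
                rw [norm_smul]
                calc (‖g s‖ * ‖x s‖) ^ 2 = ‖x s‖ ^ 2 * ‖g s‖ ^ 2 := by ring
                  _ ≤ C₁ ^ 2 * ‖g s‖ ^ 2 :=
                      mul_le_mul_of_nonneg_right
                        (pow_le_pow_left₀ (norm_nonneg _) (hx s) 2) (sq_nonneg _)
      _ = C₁ ^ 2 * ∑' s, ‖g s‖ ^ 2 := tsum_mul_left
      _ ≤ C₁ ^ 2 * 1 := mul_le_mul_of_nonneg_left hg1 (sq_nonneg _)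
      _ = C₁ ^ 2 := mul_one _
  -- rewrite the bilinear form
  have h1 : ∑' p : S × T, (fun p => Φ p * a p) p * f p.2 * (starRingEnd ℂ) (g p.1) =
      ∑ p ∈ A, Φ p * a p * f p.2 * (starRingEnd ℂ) (g p.1) :=
    tsum_eq_sum fun p hp => by simp [hA p hp]
  have h2 : ∑ p ∈ A, Φ p * a p * f p.2 * (starRingEnd ℂ) (g p.1) =
      ∑ i, ∑ p ∈ A, a p * fi i p.2 * (starRingEnd ℂ) (gi i p.1) := by
    rw [← Finset.sum_comm]
    refine Finset.sum_congr rfl fun p hp => ?_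
    calc Φ p * a p * f p.2 * (starRingEnd ℂ) (g p.1)
        = a p * (Φ p * f p.2 * (starRingEnd ℂ) (g p.1)) := by ring
      _ = a p * ∑ i, fi i p.2 * (starRingEnd ℂ) (gi i p.1) := by rw [hpt p hp]
      _ = ∑ i, a p * fi i p.2 * (starRingEnd ℂ) (gi i p.1) := by
          rw [Finset.mul_sum]
          exact Finset.sum_congr rfl fun i _ => by ring
  have h3 : ∀ i, ∑ p ∈ A, a p * fi i p.2 * (starRingEnd ℂ) (gi i p.1) =
      ∑' p : S × T, a p * fi i p.2 * (starRingEnd ℂ) (gi i p.1) :=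
    fun i => (tsum_eq_sum fun p hp => by simp [hA p hp]).symm
  set αi : Fin (Module.finrank ℂ V) → ℝ :=
    fun i => Real.sqrt (∑' t, ‖fi i t‖ ^ 2) with hαidef
  set βi : Fin (Module.finrank ℂ V) → ℝ :=
    fun i => Real.sqrt (∑' s, ‖gi i s‖ ^ 2) with hβidef
  have hCS : ∑ i, αi i * βi i ≤ C₂ * C₁ := by
    have hα2 : ∀ i, αi i ^ 2 = ∑' t, ‖fi i t‖ ^ 2 := fun i =>
      Real.sq_sqrt (tsum_nonneg fun _ => sq_nonneg _)
    have hβ2 : ∀ i, βi i ^ 2 = ∑' s, ‖gi i s‖ ^ 2 := fun i =>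
      Real.sq_sqrt (tsum_nonneg fun _ => sq_nonneg _)
    have hsα : ∑ i, αi i ^ 2 ≤ C₂ ^ 2 := by
      calc ∑ i, αi i ^ 2 = ∑ i, ∑' t, ‖fi i t‖ ^ 2 :=
            Finset.sum_congr rfl fun i _ => hα2 i
        _ ≤ C₂ ^ 2 := hfB
    have hsβ : ∑ i, βi i ^ 2 ≤ C₁ ^ 2 := by
      calc ∑ i, βi i ^ 2 = ∑ i, ∑' s, ‖gi i s‖ ^ 2 :=
            Finset.sum_congr rfl fun i _ => hβ2 i
        _ ≤ C₁ ^ 2 := hgB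
    have h4 : (∑ i, αi i * βi i) ^ 2 ≤ (∑ i, αi i ^ 2) * ∑ i, βi i ^ 2 :=
      Finset.sum_mul_sq_le_sq_mul_sq _ _ _
    have h5 : 0 ≤ ∑ i, αi i * βi i :=
      Finset.sum_nonneg fun i _ =>
        mul_nonneg (Real.sqrt_nonneg _) (Real.sqrt_nonneg _)
    have h6 : 0 ≤ ∑ i, βi i ^ 2 := Finset.sum_nonneg fun i _ => sq_nonneg _
    nlinarith [mul_nonneg hC₂ hC₁]
  calc ‖∑' p : S × T, (fun p => Φ p * a p) p * f p.2 * (starRingEnd ℂ) (g p.1)‖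
      = ‖∑ i, ∑' p : S × T, a p * fi i p.2 * (starRingEnd ℂ) (gi i p.1)‖ := by
        rw [h1, h2]
        congr 1
        exact Finset.sum_congr rfl fun i _ => h3 i
    _ ≤ ∑ i, ‖∑' p : S × T, a p * fi i p.2 * (starRingEnd ℂ) (gi i p.1)‖ :=
        norm_sum_le _ _
    _ ≤ ∑ i, opNormFS a * αi i * βi i :=
        Finset.sum_le_sum fun i _ =>
          keyBound a ha (fi i) (gi i) (hfisum i) (hgisum i)
    _ = opNormFS a * ∑ i, αi i * βi i := by
        rw [Finset.mul_sum]
        exact Finset.sum_congr rfl fun i _ => by ring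
    _ ≤ opNormFS a * (C₂ * C₁) := mul_le_mul_of_nonneg_left hCS hN0
    _ = C₁ * C₂ * opNormFS a := by ring
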